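/- Let A(ρ_dg, ρ_cv) ∈ ℝ^{d×d} be Metzler, jointly linear (homogeneous of degree 1) in the concatenated parameter vector (ρ_dg, ρ_cv) ∈ ℝ^{n_dg}_{>0} × ℝ^{n_cv}_{>0}, and monotone nonincreasing in ρ_dg in the Metzler order (i.e., ρ_dg ≤ ρ_dg' entrywise implies A(ρ_dg', ρ_cv) ≤ A(ρ_dg, ρ_cv) entrywise). If A(𝟙, ρ_cv) is Hurwitz stable for every ρ_cv ∈ ℝ^{n_cv}_{>0}, then A(ρ_dg, ρ_cv) is Hurwitz stable for every (ρ_dg, ρ_cv) ∈ ℝ^{n_dg}_{>0} × ℝ^{n_cv}_{>0}. -/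

import Mathlib

open Matrix

def Metzler {d : ℕ} (M : Matrix (Fin d) (Fin d) ℝ) : Prop :=
  ∀ i j, i ≠ j → 0 ≤ M i j

def HurwitzStable {d : ℕ} (M : Matrix (Fin d) (Fin d) ℝ) : Prop :=
  ∀ μ ∈ spectrum ℂ (M.map Complex.ofReal), μ.re < 0

section Aux

open Filter Topology Pointwise

attribute [local instance] Matrix.linftyOpNormedRing Matrix.linftyOpNormedAlgebra

lemma mapC_pow {d : ℕ} (Q : Matrix (Fin d) (Fin d) ℝ) (n : ℕ) :
    (Q.map Complex.ofReal) ^ n = (Q ^ n).map Complex.ofReal := by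
  induction n with
  | zero =>
    ext i j
    simp [Matrix.one_apply, Matrix.map_apply, apply_ite]
  | succ n ih =>
    rw [pow_succ, pow_succ, ih]
    ext i j
    simp [Matrix.mul_apply, Matrix.map_apply]

lemma mapC_mulVec {d : ℕ} (B : Matrix (Fin d) (Fin d) ℝ) (v : Fin d → ℝ) (i : Fin d) :
    ((B.map Complex.ofReal) *ᵥ (fun j => (v j : ℂ))) i = ((B *ᵥ v) i : ℂ) := by
  simp [Matrix.mulVec, dotProduct, Matrix.map_apply]

lemma key_comparison {d : ℕ} (hd : 0 < d) (M N : Matrix (Fin d) (Fin d) ℝ)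
    (hM : Metzler M) (hMN : ∀ i j, M i j ≤ N i j)
    (hN : HurwitzStable N) : HurwitzStable M := by
  haveI : Nonempty (Fin d) := ⟨⟨0, hd⟩⟩
  intro μ hμ
  by_contra hre
  push_neg at hre
  set Mc := M.map Complex.ofReal with hMcdef
  set Nc := N.map Complex.ofReal with hNcdef
  -- eigenvector of Mc
  obtain ⟨x, hx0, hxe⟩ : ∃ x : Fin d → ℂ, x ≠ 0 ∧ Mc *ᵥ x = μ • x := by
    rw [← AlgEquiv.spectrum_eq (Matrix.toLinAlgEquiv' (R := ℂ) (n := Fin d)),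
      ← Module.End.hasEigenvalue_iff_mem_spectrum] at hμ
    obtain ⟨x, hx⟩ := hμ.exists_hasEigenvector
    refine ⟨x, hx.2, ?_⟩
    have := hx.apply_eq_smul
    simpa [Matrix.toLinAlgEquiv'_apply] using this
  -- spectrum of Nc : compact, nonempty, uniform bounds
  have hKne : (spectrum ℂ Nc).Nonempty := spectrum.nonempty Nc
  have hKcpt : IsCompact (spectrum ℂ Nc) := spectrum.isCompact Nc
  obtain ⟨R, hR0, hRb⟩ : ∃ R, 0 ≤ R ∧ ∀ ν ∈ spectrum ℂ Nc, ‖ν‖ ≤ R :=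
    ⟨‖Nc‖, norm_nonneg _, fun ν h => spectrum.norm_le_norm_of_mem h⟩
  obtain ⟨δ, hδpos, hReK⟩ : ∃ δ, 0 < δ ∧ ∀ ν ∈ spectrum ℂ Nc, ν.re ≤ -δ := by
    obtain ⟨ν₀, hν₀K, hν₀max⟩ :=
      hKcpt.exists_isMaxOn hKne (Complex.continuous_re.continuousOn)
    refine ⟨-ν₀.re, by linarith [hN ν₀ hν₀K], fun ν hν => by simpa using hν₀max hν⟩
  -- choice of the shift s
  obtain ⟨s, hs0, hdiagM, hdiagN, hsR⟩ : ∃ s, 0 < s ∧ (∀ i, 0 ≤ M i i + s) ∧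
      (∀ i, 0 ≤ N i i + s) ∧ R * R < s * δ := by
    refine ⟨1 + δ + R * R / δ + ∑ i, (|M i i| + |N i i|), ?_, ?_, ?_, ?_⟩
    · have h2 : 0 ≤ R * R / δ := by positivity
      have hsum0 : (0:ℝ) ≤ ∑ i, (|M i i| + |N i i|) :=
        Finset.sum_nonneg fun i _ => by positivity
      linarith
    · intro i
      have h1 : |M i i| + |N i i| ≤ ∑ j, (|M j j| + |N j j|) :=
        Finset.single_le_sum (f := fun j => |M j j| + |N j j|)
          (fun j _ => by positivity) (Finset.mem_univ i)
      have h2 : 0 ≤ R * R / δ := by positivity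
      have := abs_nonneg (N i i); have := neg_abs_le (M i i)
      linarith
    · intro i
      have h1 : |M i i| + |N i i| ≤ ∑ j, (|M j j| + |N j j|) :=
        Finset.single_le_sum (f := fun j => |M j j| + |N j j|)
          (fun j _ => by positivity) (Finset.mem_univ i)
      have h2 : 0 ≤ R * R / δ := by positivity
      have := abs_nonneg (M i i); have := neg_abs_le (N i i)
      linarith
    · have hsum0 : (0:ℝ) ≤ ∑ i, (|M i i| + |N i i|) :=
        Finset.sum_nonneg fun i _ => by positivity
      have h1 : (1 + δ + R * R / δ) * δ ≤
          (1 + δ + R * R / δ + ∑ i, (|M i i| + |N i i|)) * δ := by nlinarith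
      have h3 : (1 + δ + R * R / δ) * δ = δ + δ * δ + R * R := by
        field_simp
      nlinarith [mul_pos hδpos hδpos]
  -- shifted matrices
  set Q : Matrix (Fin d) (Fin d) ℝ := N + s • 1 with hQdef
  set P : Matrix (Fin d) (Fin d) ℝ := M + s • 1 with hPdef
  have hQapp : ∀ i j, Q i j = N i j + (if i = j then s else 0) := by
    intro i j
    simp [hQdef, Matrix.add_apply, Matrix.smul_apply, Matrix.one_apply, mul_ite]
  have hPapp : ∀ i j, P i j = M i j + (if i = j then s else 0) := by
    intro i j
    simp [hPdef, Matrix.add_apply, Matrix.smul_apply, Matrix.one_apply, mul_ite]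
  have hPpos : ∀ i j, 0 ≤ P i j := by
    intro i j
    rw [hPapp]
    by_cases h : i = j
    · subst h; simpa using hdiagM i
    · simpa [h] using hM i j h
  have hPQ : ∀ i j, P i j ≤ Q i j := by
    intro i j
    rw [hPapp, hQapp]
    exact add_le_add_left (hMN i j) _
  have hQpos : ∀ i j, 0 ≤ Q i j := fun i j => le_trans (hPpos i j) (hPQ i j)
  -- the nonnegative vector y
  set y : Fin d → ℝ := fun i => ‖x i‖ with hydef
  have hy0 : ∀ i, 0 ≤ y i := fun i => norm_nonneg _
  -- P over ℂ acting on x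
  have hPx : ∀ i, ((P.map Complex.ofReal) *ᵥ x) i = (μ + s) * x i := by
    have hPc : P.map Complex.ofReal = Mc + (s : ℂ) • 1 := by
      ext i j
      by_cases h : i = j <;>
        simp [hPdef, hMcdef, Matrix.map_apply, Matrix.add_apply, Matrix.smul_apply,
          Matrix.one_apply, h]
    intro i
    rw [hPc, Matrix.add_mulVec, Matrix.smul_mulVec, Matrix.one_mulVec, hxe]
    simp [Pi.smul_apply, smul_eq_mul]
    ring
  -- key inequality : s * y ≤ Q *ᵥ y
  have hkey : ∀ i, s * y i ≤ (Q *ᵥ y) i := by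
    intro i
    have h1 : ‖μ + (s:ℂ)‖ * y i ≤ (P *ᵥ y) i := by
      have h2 : ‖((P.map Complex.ofReal) *ᵥ x) i‖ = ‖μ + (s:ℂ)‖ * y i := by
        rw [hPx i, norm_mul]
      rw [← h2]
      have h3 : ((P.map Complex.ofReal) *ᵥ x) i = ∑ j, (P i j : ℂ) * x j := by
        simp [Matrix.mulVec, dotProduct, Matrix.map_apply]
      rw [h3]
      calc ‖∑ j, (P i j : ℂ) * x j‖ ≤ ∑ j, ‖(P i j : ℂ) * x j‖ := norm_sum_le _ _
        _ = ∑ j, P i j * y j := by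
            apply Finset.sum_congr rfl
            intro j _
            rw [norm_mul, Complex.norm_real, Real.norm_eq_abs, abs_of_nonneg (hPpos i j)]
        _ = (P *ᵥ y) i := by simp [Matrix.mulVec, dotProduct]
    have h4 : s ≤ ‖μ + (s:ℂ)‖ := by
      have : (μ + (s:ℂ)).re ≤ ‖μ + (s:ℂ)‖ := Complex.re_le_norm _
      have h5 : (μ + (s:ℂ)).re = μ.re + s := by simp
      linarith
    have h6 : (P *ᵥ y) i ≤ (Q *ᵥ y) i := by
      simp only [Matrix.mulVec, dotProduct]
      exact Finset.sum_le_sum fun j _ => mul_le_mul_of_nonneg_right (hPQ i j) (hy0 j)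
    calc s * y i ≤ ‖μ + (s:ℂ)‖ * y i := mul_le_mul_of_nonneg_right h4 (hy0 i)
      _ ≤ (P *ᵥ y) i := h1
      _ ≤ (Q *ᵥ y) i := h6
  -- iterate
  have hQn : ∀ n : ℕ, ∀ i, s ^ n * y i ≤ ((Q ^ n) *ᵥ y) i := by
    intro n
    induction n with
    | zero => intro i; simp [Matrix.one_mulVec]
    | succ n ih =>
      intro i
      have h1 : (Q ^ (n+1)) *ᵥ y = Q *ᵥ ((Q ^ n) *ᵥ y) := by
        rw [Matrix.mulVec_mulVec, ← pow_succ']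
      rw [h1]
      have h2 : ∀ j, s ^ n * y j ≤ ((Q ^ n) *ᵥ y) j := ih
      have h3 : (Q *ᵥ (fun j => s ^ n * y j)) i ≤ (Q *ᵥ ((Q ^ n) *ᵥ y)) i := by
        simp only [Matrix.mulVec, dotProduct]
        exact Finset.sum_le_sum fun j _ => mul_le_mul_of_nonneg_left (h2 j) (hQpos i j)
      have h4 : (Q *ᵥ (fun j => s ^ n * y j)) i = s ^ n * (Q *ᵥ y) i := by
        simp only [Matrix.mulVec, dotProduct, Finset.mul_sum]
        apply Finset.sum_congr rfl
        intro j _; ring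
      have h5 : s ^ (n+1) * y i = s ^ n * (s * y i) := by ring
      rw [h5]
      calc s ^ n * (s * y i) ≤ s ^ n * (Q *ᵥ y) i :=
            mul_le_mul_of_nonneg_left (hkey i) (pow_nonneg hs0.le n)
        _ = (Q *ᵥ (fun j => s ^ n * y j)) i := h4.symm
        _ ≤ (Q *ᵥ ((Q ^ n) *ᵥ y)) i := h3
  -- pick index with maximal y
  obtain ⟨i0, -, hi0⟩ := Finset.exists_max_image Finset.univ y ⟨Classical.arbitrary _, Finset.mem_univ _⟩
  have hyi0 : 0 < y i0 := by
    rcases eq_or_lt_of_le (hy0 i0) with h | h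
    · exfalso
      apply hx0
      funext j
      have : y j ≤ 0 := le_trans (hi0 j (Finset.mem_univ j)) h.symm.le
      have hyj : y j = 0 := le_antisymm this (hy0 j)
      simpa [hydef, norm_eq_zero] using hyj
    · exact h
  -- norm lower bound
  set Qc : Matrix (Fin d) (Fin d) ℂ := Q.map Complex.ofReal with hQcdef
  have hnorm : ∀ n : ℕ, s ^ n ≤ ‖Qc ^ n‖ := by
    intro n
    set yc : Fin d → ℂ := fun j => (y j : ℂ) with hycdef
    have hycnorm : ‖yc‖ ≤ y i0 := by
      apply pi_norm_le_iff_of_nonneg (hy0 i0) |>.2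
      intro j
      simp only [hycdef, Complex.norm_real, Real.norm_eq_abs, abs_of_nonneg (hy0 j)]
      exact hi0 j (Finset.mem_univ j)
    have h1 : (Qc ^ n *ᵥ yc) i0 = (((Q ^ n) *ᵥ y) i0 : ℂ) := by
      rw [hQcdef, mapC_pow]
      exact mapC_mulVec _ _ _
    have h2 : s ^ n * y i0 ≤ ‖(Qc ^ n *ᵥ yc) i0‖ := by
      rw [h1]
      rw [Complex.norm_real, Real.norm_eq_abs]
      exact le_trans (hQn n i0) (le_abs_self _)
    have h3 : ‖(Qc ^ n *ᵥ yc) i0‖ ≤ ‖Qc ^ n *ᵥ yc‖ := norm_le_pi_norm _ i0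
    have h4 : ‖Qc ^ n *ᵥ yc‖ ≤ ‖Qc ^ n‖ * ‖yc‖ := Matrix.linfty_opNorm_mulVec _ _
    have h5 : ‖Qc ^ n‖ * ‖yc‖ ≤ ‖Qc ^ n‖ * y i0 :=
      mul_le_mul_of_nonneg_left hycnorm (norm_nonneg _)
    have h6 : s ^ n * y i0 ≤ ‖Qc ^ n‖ * y i0 := by linarith
    exact le_of_mul_le_mul_right (by linarith) hyi0
  -- Gelfand lower bound on the spectral radius
  have hr : ENNReal.ofReal s ≤ spectralRadius ℂ Qc := by
    have hg := spectrum.pow_norm_pow_one_div_tendsto_nhds_spectralRadius Qc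
    refine ge_of_tendsto hg ?_
    filter_upwards [eventually_ge_atTop 1] with n hn
    apply ENNReal.ofReal_le_ofReal
    have hn0 : (0:ℝ) < n := by exact_mod_cast hn
    have h1 : s = (s ^ n) ^ (1 / (n:ℝ)) := by
      rw [← Real.rpow_natCast s n, ← Real.rpow_mul hs0.le]
      rw [mul_one_div, div_self hn0.ne', Real.rpow_one]
    rw [h1]
    exact Real.rpow_le_rpow (pow_nonneg hs0.le n) (hnorm n) (by positivity)
  -- spectral radius upper bound
  have hQc : Qc = algebraMap ℂ _ (s : ℂ) + Nc := by
    ext i j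
    by_cases h : i = j <;>
      simp [hQcdef, hQdef, hNcdef, Matrix.map_apply, Matrix.add_apply, Matrix.smul_apply,
        Matrix.one_apply, Algebra.algebraMap_eq_smul_one, h, add_comm]
  have hσQ : spectrum ℂ Qc = ({(s:ℂ)} : Set ℂ) + spectrum ℂ Nc := by
    rw [hQc]; exact (spectrum.singleton_add_eq Nc (s:ℂ)).symm
  obtain ⟨m, hm0, hms, hmb⟩ : ∃ m, 0 ≤ m ∧ m < s ∧
      ∀ ν ∈ spectrum ℂ Nc, ‖(s:ℂ) + ν‖ ≤ m := by
    refine ⟨Real.sqrt (max (s * s - 2 * s * δ + R * R) 0), Real.sqrt_nonneg _, ?_, ?_⟩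
    · refine (Real.sqrt_lt' hs0).2 ?_
      rw [max_lt_iff]
      refine ⟨by nlinarith [mul_pos hs0 hδpos], by nlinarith⟩
    · intro ν hν
      have ha : ν.re ≤ -δ := hReK ν hν
      have hb : ‖ν‖ ≤ R := hRb ν hν
      have hb2 : ν.re * ν.re + ν.im * ν.im ≤ R * R := by
        have h' : ‖ν‖ * ‖ν‖ ≤ R * R := mul_le_mul hb hb (norm_nonneg _) hR0
        have habs : ‖ν‖ * ‖ν‖ = ν.re * ν.re + ν.im * ν.im := by
          rw [Complex.norm_mul_self_eq_normSq, Complex.normSq_apply]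
        linarith [habs ▸ h']
      have hcalc : ‖(s:ℂ) + ν‖ * ‖(s:ℂ) + ν‖ = (s + ν.re) * (s + ν.re) + ν.im * ν.im := by
        rw [Complex.norm_mul_self_eq_normSq, Complex.normSq_apply]
        simp
      have h7 : ‖(s:ℂ) + ν‖ * ‖(s:ℂ) + ν‖ ≤ max (s * s - 2 * s * δ + R * R) 0 := by
        rw [hcalc]
        apply le_max_of_le_left
        nlinarith
      calc ‖(s:ℂ) + ν‖ = Real.sqrt (‖(s:ℂ) + ν‖ * ‖(s:ℂ) + ν‖) :=
            (Real.sqrt_mul_self (norm_nonneg _)).symm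
        _ ≤ _ := Real.sqrt_le_sqrt h7
  have hbound : ∀ lam ∈ spectrum ℂ Qc, ‖lam‖ ≤ m := by
    intro lam hlam
    rw [hσQ, Set.singleton_add] at hlam
    obtain ⟨ν, hν, rfl⟩ := hlam
    exact hmb ν hν
  have hupper : spectralRadius ℂ Qc ≤ ENNReal.ofReal m := by
    rw [show spectralRadius ℂ Qc = ⨆ lam ∈ spectrum ℂ Qc, (‖lam‖₊ : ENNReal) from rfl]
    apply iSup₂_le
    intro lam hlam
    rw [show ((‖lam‖₊ : ENNReal)) = ENNReal.ofReal ‖lam‖ from (ofReal_norm lam).symm]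
    exact ENNReal.ofReal_le_ofReal (hbound lam hlam)
  have : ENNReal.ofReal s ≤ ENNReal.ofReal m := le_trans hr hupper
  rw [ENNReal.ofReal_le_ofReal_iff hm0] at this
  linarith

end Aux

theorem stmt15 {d ndg ncv : ℕ}
    (A : (Fin ndg → ℝ) → (Fin ncv → ℝ) → Matrix (Fin d) (Fin d) ℝ)
    (hMetz : ∀ ρdg ρcv, (∀ i, 0 < ρdg i) → (∀ i, 0 < ρcv i) → Metzler (A ρdg ρcv))
    (hadd : ∀ ρdg ρdg' ρcv ρcv',
      A (ρdg + ρdg') (ρcv + ρcv') = A ρdg ρcv + A ρdg' ρcv')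
    (hhom : ∀ (c : ℝ), 0 < c → ∀ ρdg ρcv, A (c • ρdg) (c • ρcv) = c • A ρdg ρcv)
    (hmono : ∀ ρdg ρdg' ρcv, (∀ i, ρdg i ≤ ρdg' i) →
      ∀ i j, A ρdg' ρcv i j ≤ A ρdg ρcv i j)
    (hstab : ∀ ρcv, (∀ i, 0 < ρcv i) → HurwitzStable (A (fun _ => 1) ρcv)) :
    ∀ ρdg ρcv, (∀ i, 0 < ρdg i) → (∀ i, 0 < ρcv i) →
      HurwitzStable (A ρdg ρcv) := by
  intro ρdg ρcv hdg hcv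
  rcases Nat.eq_zero_or_pos d with hd | hd
  · subst hd
    intro μ hμ
    haveI : Subsingleton (Matrix (Fin 0) (Fin 0) ℂ) := by infer_instance
    exact absurd (isUnit_of_subsingleton _) (spectrum.mem_iff.mp hμ)
  rcases Nat.eq_zero_or_pos ndg with hn | hn
  · have hρ : ρdg = (fun _ => 1) := by
      funext i
      exact absurd i.2 (by omega)
    rw [hρ]
    exact hstab ρcv hcv
  haveI : Nonempty (Fin ndg) := ⟨⟨0, hn⟩⟩
  set θ : ℝ := Finset.univ.inf' Finset.univ_nonempty ρdg with hθdef
  have hθpos : 0 < θ := by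
    rw [hθdef, Finset.lt_inf'_iff]
    exact fun i _ => hdg i
  have hθle : ∀ i, θ ≤ ρdg i := fun i => Finset.inf'_le _ (Finset.mem_univ i)
  set ρcv' : Fin ncv → ℝ := θ⁻¹ • ρcv with hρcv'
  have hcv' : ∀ i, 0 < ρcv' i := by
    intro i
    rw [hρcv']
    exact mul_pos (inv_pos.2 hθpos) (hcv i)
  have hNdef : A (fun _ => θ) ρcv = θ • A (fun _ => 1) ρcv' := by
    have h := hhom θ hθpos (fun _ => 1) ρcv'
    have e1 : θ • (fun _ : Fin ndg => (1:ℝ)) = (fun _ => θ) := by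
      funext i; simp
    have e2 : θ • ρcv' = ρcv := by
      funext i
      show θ * (θ⁻¹ • ρcv) i = ρcv i
      rw [Pi.smul_apply, smul_eq_mul, ← mul_assoc, mul_inv_cancel₀ hθpos.ne', one_mul]
    rw [e1, e2] at h
    exact h
  have hNH : HurwitzStable (A (fun _ => θ) ρcv) := by
    rw [hNdef]
    intro μ hμ
    have hmap : ((θ • A (fun _ => 1) ρcv').map Complex.ofReal)
        = (θ:ℂ) • ((A (fun _ => 1) ρcv').map Complex.ofReal) := by
      ext i j
      simp [Matrix.map_apply, Matrix.smul_apply]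
    rw [hmap] at hμ
    have hθc : ((θ:ℂ)) ≠ 0 := by exact_mod_cast hθpos.ne'
    rw [show ((θ:ℂ) • ((A (fun _ => 1) ρcv').map Complex.ofReal))
        = ((Units.mk0 (θ:ℂ) hθc : ℂˣ) • ((A (fun _ => 1) ρcv').map Complex.ofReal)) from rfl,
      spectrum.unit_smul_eq_smul] at hμ
    obtain ⟨ν, hν, rfl⟩ := hμ
    have hνre := hstab ρcv' hcv' ν hν
    show ((θ:ℂ) * ν).re < 0
    have h' : ((θ:ℂ) * ν).re = θ * ν.re := by
      simp [Complex.mul_re]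
    rw [h']
    exact mul_neg_of_pos_of_neg hθpos hνre
  exact key_comparison hd _ _ (hMetz ρdg ρcv hdg hcv)
    (hmono (fun _ => θ) ρdg ρcv hθle) hNH
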